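/- Let Q₀ ⊆ ℚ be a set such that both Q₀ and its complement are dense in ℚ (between any two rationals there is an element of Q₀ and an element of ℚ\Q₀), and let the dense local order ℚ* be the tournament on ℚ in which x → y iff either x < y and (x ∈ Q₀ ↔ y ∈ Q₀), or y < x and ¬(x ∈ Q₀ ↔ y ∈ Q₀). Then the distinguishing number of ℚ* is infinite: for every n ∈ ℕ and every coloring c : ℚ → Fin n there exists a bijection g : ℚ → ℚ with g ≠ id, preserving the tournament relation (x → y iff g(x) → g(y)), and satisfying c(g(q)) = c(q) for all q. -/

import Mathlib

noncomputable section

namespace DistAux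

open Order

variable {α : Type*} [LinearOrder α] {K : Type*}

/-- Colored density hypothesis: every inhabited color class is dense and unbounded. -/
def Dense2 (κ : α → K) : Prop :=
  ∀ (x : α) (L U : Finset α), (∀ l ∈ L, ∀ w ∈ U, l < w) →
    ∃ y, (∀ l ∈ L, l < y) ∧ (∀ w ∈ U, y < w) ∧ κ y = κ x

/-- Partial colored order isomorphisms. -/
def PIso (κ : α → K) : Type _ :=
  { f : Finset (α × α) //
    (∀ p ∈ f, ∀ q ∈ f, cmp (Prod.fst p) (Prod.fst q) = cmp (Prod.snd p) (Prod.snd q)) ∧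
      ∀ p ∈ f, κ (Prod.fst p) = κ (Prod.snd p) }

instance (κ : α → K) : Preorder (PIso κ) := Subtype.preorder _

variable {κ : α → K}

theorem exists_across (H : Dense2 κ) (f : PIso κ) (a : α) :
    ∃ b : α, κ b = κ a ∧ ∀ p ∈ f.val, cmp (Prod.fst p) a = cmp (Prod.snd p) b := by
  by_cases h : ∃ b, (a, b) ∈ f.val
  · obtain ⟨b, hb⟩ := h
    exact ⟨b, (f.prop.2 _ hb).symm, fun p hp => f.prop.1 _ hp _ hb⟩
  obtain ⟨b, hb1, hb2, hbk⟩ :=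
    H a ((f.val.filter fun p => p.1 < a).image Prod.snd)
      ((f.val.filter fun p => a < p.1).image Prod.snd) (by
        intro x hx y hy
        rw [Finset.mem_image] at hx hy
        rcases hx with ⟨p, hp1, rfl⟩
        rcases hy with ⟨q, hq1, rfl⟩
        rw [Finset.mem_filter] at hp1 hq1
        rw [← lt_iff_lt_of_cmp_eq_cmp (f.prop.1 _ hp1.1 _ hq1.1)]
        exact lt_trans hp1.2 hq1.2)
  refine ⟨b, hbk, ?_⟩
  rintro ⟨p1, p2⟩ hp
  have hne : p1 ≠ a := fun he => h ⟨p2, he ▸ hp⟩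
  rcases lt_or_gt_of_ne hne with hl | hr
  · have hthis : p1 < a ∧ p2 < b :=
      ⟨hl, hb1 _ (Finset.mem_image.mpr ⟨(p1, p2), Finset.mem_filter.mpr ⟨hp, hl⟩, rfl⟩)⟩
    rw [← cmp_eq_lt_iff, ← cmp_eq_lt_iff] at hthis
    exact hthis.1.trans hthis.2.symm
  · have hthis : a < p1 ∧ b < p2 :=
      ⟨hr, hb2 _ (Finset.mem_image.mpr ⟨(p1, p2), Finset.mem_filter.mpr ⟨hp, hr⟩, rfl⟩)⟩
    rw [← cmp_eq_gt_iff, ← cmp_eq_gt_iff] at hthis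
    exact hthis.1.trans hthis.2.symm

theorem exists_across' (H : Dense2 κ) (f : PIso κ) (b : α) :
    ∃ a : α, κ a = κ b ∧ ∀ p ∈ f.val, cmp (Prod.snd p) b = cmp (Prod.fst p) a := by
  by_cases h : ∃ a, (a, b) ∈ f.val
  · obtain ⟨a, ha⟩ := h
    exact ⟨a, f.prop.2 _ ha, fun p hp => (f.prop.1 _ hp _ ha).symm⟩
  obtain ⟨a, hb1, hb2, hbk⟩ :=
    H b ((f.val.filter fun p => p.2 < b).image Prod.fst)
      ((f.val.filter fun p => b < p.2).image Prod.fst) (by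
        intro x hx y hy
        rw [Finset.mem_image] at hx hy
        rcases hx with ⟨p, hp1, rfl⟩
        rcases hy with ⟨q, hq1, rfl⟩
        rw [Finset.mem_filter] at hp1 hq1
        rw [lt_iff_lt_of_cmp_eq_cmp (f.prop.1 _ hp1.1 _ hq1.1)]
        exact lt_trans hp1.2 hq1.2)
  refine ⟨a, hbk, ?_⟩
  rintro ⟨p1, p2⟩ hp
  have hne : p2 ≠ b := fun he => h ⟨p1, he ▸ hp⟩
  rcases lt_or_gt_of_ne hne with hl | hr
  · have hthis : p2 < b ∧ p1 < a :=
      ⟨hl, hb1 _ (Finset.mem_image.mpr ⟨(p1, p2), Finset.mem_filter.mpr ⟨hp, hl⟩, rfl⟩)⟩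
    rw [← cmp_eq_lt_iff, ← cmp_eq_lt_iff] at hthis
    exact hthis.1.trans hthis.2.symm
  · have hthis : b < p2 ∧ a < p1 :=
      ⟨hr, hb2 _ (Finset.mem_image.mpr ⟨(p1, p2), Finset.mem_filter.mpr ⟨hp, hr⟩, rfl⟩)⟩
    rw [← cmp_eq_gt_iff, ← cmp_eq_gt_iff] at hthis
    exact hthis.1.trans hthis.2.symm

/-- The set of partial isos defined at `a` on the left is cofinal. -/
def definedAtLeft (H : Dense2 κ) (a : α) : Cofinal (PIso κ) where
  carrier := {f | ∃ b, (a, b) ∈ f.val}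
  isCofinal f := by
    obtain ⟨b, hk, hcmp⟩ := exists_across H f a
    refine ⟨⟨insert (a, b) f.val, ?_, ?_⟩, ⟨b, Finset.mem_insert_self _ _⟩,
      Finset.subset_insert _ _⟩
    · intro p hp q hq
      rw [Finset.mem_insert] at hp hq
      rcases hp with rfl | pf <;> rcases hq with rfl | qf
      · simp only [cmp_self_eq_eq]
      · rw [cmp_eq_cmp_symm]; exact hcmp _ qf
      · exact hcmp _ pf
      · exact f.prop.1 _ pf _ qf
    · intro p hp
      rw [Finset.mem_insert] at hp
      rcases hp with rfl | pf
      · exact hk.symm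
      · exact f.prop.2 _ pf

/-- The set of partial isos defined at `b` on the right is cofinal. -/
def definedAtRight (H : Dense2 κ) (b : α) : Cofinal (PIso κ) where
  carrier := {f | ∃ a, (a, b) ∈ f.val}
  isCofinal f := by
    obtain ⟨a, hk, hcmp⟩ := exists_across' H f b
    refine ⟨⟨insert (a, b) f.val, ?_, ?_⟩, ⟨a, Finset.mem_insert_self _ _⟩,
      Finset.subset_insert _ _⟩
    · intro p hp q hq
      rw [Finset.mem_insert] at hp hq
      rcases hp with rfl | pf <;> rcases hq with rfl | qf
      · simp only [cmp_self_eq_eq]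
      · rw [cmp_eq_cmp_symm]; exact (hcmp _ qf).symm
      · exact (hcmp _ pf).symm
      · exact f.prop.1 _ pf _ qf
    · intro p hp
      rw [Finset.mem_insert] at hp
      rcases hp with rfl | pf
      · exact hk
      · exact f.prop.2 _ pf

/-- Back-and-forth: a colored dense countable linear order has an automorphism sending `a` to
`b` whenever they have the same color. -/
theorem exists_colored_auto [Countable α] (H : Dense2 κ) (a b : α) (hab : κ a = κ b) :
    ∃ g : α ≃ α, StrictMono g ∧ (∀ x, κ (g x) = κ x) ∧ g a = b := by
  cases nonempty_encodable α
  let seed : PIso κ := ⟨{(a, b)}, by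
    constructor
    · intro p hp q hq
      rw [Finset.mem_singleton] at hp hq
      subst hp; subst hq
      simp [cmp_self_eq_eq]
    · intro p hp
      rw [Finset.mem_singleton] at hp
      subst hp; exact hab⟩
  let to_cofinal : α ⊕ α → Cofinal (PIso κ) := fun p =>
    Sum.recOn p (definedAtLeft H) (definedAtRight H)
  let I := idealOfCofinals seed to_cofinal
  have hseed : seed ∈ I := mem_idealOfCofinals _ _
  have hF : ∀ x : α, ∃ y, ∃ f, f ∈ I ∧ (x, y) ∈ f.val := by
    intro x
    obtain ⟨f, ⟨y, hy⟩, hfI⟩ := cofinal_meets_idealOfCofinals seed to_cofinal (Sum.inl x)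
    exact ⟨y, f, hfI, hy⟩
  have hG : ∀ y : α, ∃ x, ∃ f, f ∈ I ∧ (x, y) ∈ f.val := by
    intro y
    obtain ⟨f, ⟨x, hx⟩, hfI⟩ := cofinal_meets_idealOfCofinals seed to_cofinal (Sum.inr y)
    exact ⟨x, f, hfI, hx⟩
  choose F f1 hf1 hmemF using hF
  choose G f2 hf2 hmemG using hG
  have key : ∀ x y, cmp x (G y) = cmp (F x) y := by
    intro x y
    obtain ⟨m, _hm, fm, gm⟩ := I.directed _ (hf1 x) _ (hf2 y)
    exact m.prop.1 (x, F x) (fm (hmemF x)) (G y, y) (gm (hmemG y))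
  let iso : α ≃o α := OrderIso.ofCmpEqCmp F G key
  have hκ : ∀ x, κ (F x) = κ x := fun x => ((f1 x).prop.2 _ (hmemF x)).symm
  have hFa : F a = b := by
    obtain ⟨m, _hm, fm, gm⟩ := I.directed _ (hf1 a) _ hseed
    have := m.prop.1 (a, F a) (fm (hmemF a)) (a, b) (gm (Finset.mem_singleton_self _))
    simp only [cmp_self_eq_eq] at this
    exact (cmp_eq_eq_iff _ _).mp this.symm
  exact ⟨iso.toEquiv, iso.strictMono, hκ, hFa⟩

end DistAux

/-- The dense local order `ℚ*` has infinite distinguishing number. -/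
theorem dense_local_order_distinguishing_number_infinite
    (Q₀ : Set ℚ)
    (hdense : ∀ a b : ℚ, a < b →
      (∃ q ∈ Q₀, a < q ∧ q < b) ∧ (∃ q ∉ Q₀, a < q ∧ q < b))
    (R : ℚ → ℚ → Prop)
    (hR : ∀ x y : ℚ, R x y ↔
      ((x < y ∧ (x ∈ Q₀ ↔ y ∈ Q₀)) ∨ (y < x ∧ ¬ (x ∈ Q₀ ↔ y ∈ Q₀))))
    (n : ℕ) (c : ℚ → Fin n) :
    ∃ g : ℚ ≃ ℚ, (∃ q, g q ≠ q) ∧ (∀ x y, R x y ↔ R (g x) (g y)) ∧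
      ∀ q, c (g q) = c q := by
  classical
  let k : ℚ → Fin n × Bool := fun x => (c x, decide (x ∈ Q₀))
  have hfin : ∀ u v : ℚ, (k '' Set.Ioo u v).Finite := fun u v => Set.toFinite _
  let S : Set ℕ := {m | ∃ u v : ℚ, u < v ∧ (k '' Set.Ioo u v).ncard = m}
  have hS : S.Nonempty := ⟨_, 0, 1, by norm_num, rfl⟩
  obtain ⟨u, v, huv, hM⟩ := Nat.sInf_mem hS
  have hdens : ∀ x ∈ Set.Ioo u v, ∀ u' v', u ≤ u' → u' < v' → v' ≤ v →
      ∃ y ∈ Set.Ioo u' v', k y = k x := by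
    intro x hx u' v' h1 h2 h3
    have hsub : k '' Set.Ioo u' v' ⊆ k '' Set.Ioo u v :=
      Set.image_mono (Set.Ioo_subset_Ioo h1 h3)
    have hle : sInf S ≤ (k '' Set.Ioo u' v').ncard := Nat.sInf_le ⟨u', v', h2, rfl⟩
    have heq : k '' Set.Ioo u' v' = k '' Set.Ioo u v :=
      Set.eq_of_subset_of_ncard_le hsub (by rw [hM]; exact hle) (hfin u v)
    have hmem : k x ∈ k '' Set.Ioo u' v' := by
      rw [heq]; exact Set.mem_image_of_mem k hx
    obtain ⟨y, hy, hyk⟩ := hmem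
    exact ⟨y, hy, hyk⟩
  set a : ℚ := (u + v) / 2 with ha
  have hau : u < a := by rw [ha]; linarith
  have hav : a < v := by rw [ha]; linarith
  obtain ⟨b, hbIoo, hbk⟩ := hdens a ⟨hau, hav⟩ a v hau.le hav le_rfl
  have hbuv : b ∈ Set.Ioo u v := ⟨lt_trans hau hbIoo.1, hbIoo.2⟩
  let κ : {x : ℚ // x ∈ Set.Ioo u v} → Fin n × Bool := fun x => k x.val
  have HH : DistAux.Dense2 κ := by
    intro x L U hLU
    set Lf := insert u (L.image Subtype.val) with hLf
    set Uf := insert v (U.image Subtype.val) with hUf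
    have hLfne : Lf.Nonempty := Finset.insert_nonempty _ _
    have hUfne : Uf.Nonempty := Finset.insert_nonempty _ _
    set u' := Lf.max' hLfne with hu'def
    set v' := Uf.min' hUfne with hv'def
    have hu' : u ≤ u' := Finset.le_max' _ _ (Finset.mem_insert_self _ _)
    have hv' : v' ≤ v := Finset.min'_le _ _ (Finset.mem_insert_self _ _)
    have hLle : ∀ l ∈ L, l.val ≤ u' := fun l hl =>
      Finset.le_max' _ _ (Finset.mem_insert_of_mem (Finset.mem_image_of_mem _ hl))
    have hUle : ∀ w ∈ U, v' ≤ w.val := fun w hw =>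
      Finset.min'_le _ _ (Finset.mem_insert_of_mem (Finset.mem_image_of_mem _ hw))
    have hu'v' : u' < v' := by
      have hmu : u' ∈ Lf := Finset.max'_mem _ _
      have hmv : v' ∈ Uf := Finset.min'_mem _ _
      rw [hLf, Finset.mem_insert] at hmu
      rw [hUf, Finset.mem_insert] at hmv
      rcases hmu with h | h
      · rcases hmv with h' | h'
        · rw [h, h']; exact huv
        · obtain ⟨w, hw, hw'⟩ := Finset.mem_image.mp h'
          rw [h, ← hw']; exact w.2.1
      · obtain ⟨l, hl, hl'⟩ := Finset.mem_image.mp h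
        rcases hmv with h' | h'
        · rw [h', ← hl']; exact l.2.2
        · obtain ⟨w, hw, hw'⟩ := Finset.mem_image.mp h'
          rw [← hl', ← hw']; exact hLU l hl w hw
    obtain ⟨y, hy, hyk⟩ := hdens x.val x.2 u' v' hu' hu'v' hv'
    refine ⟨⟨y, ⟨lt_of_le_of_lt hu' hy.1, lt_of_lt_of_le hy.2 hv'⟩⟩, ?_, ?_, hyk⟩
    · intro l hl
      exact Subtype.coe_lt_coe.mp (lt_of_le_of_lt (hLle l hl) hy.1)
    · intro w hw
      exact Subtype.coe_lt_coe.mp (lt_of_lt_of_le hy.2 (hUle w hw))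
  obtain ⟨g₀, hmono, hκ, hg₀ab⟩ := DistAux.exists_colored_auto HH
    ⟨a, ⟨hau, hav⟩⟩ ⟨b, hbuv⟩ hbk.symm
  let gf : ℚ → ℚ := fun x => if h : x ∈ Set.Ioo u v then (g₀ ⟨x, h⟩).val else x
  let gi : ℚ → ℚ := fun x => if h : x ∈ Set.Ioo u v then (g₀.symm ⟨x, h⟩).val else x
  have hleft : ∀ x, gi (gf x) = x := by
    intro x
    by_cases h : x ∈ Set.Ioo u v
    · simp only [gf, gi, dif_pos h, dif_pos (g₀ ⟨x, h⟩).2]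
      show (g₀.symm (g₀ ⟨x, h⟩)).val = x
      rw [Equiv.symm_apply_apply]
    · simp only [gf, gi, dif_neg h]
  have hright : ∀ x, gf (gi x) = x := by
    intro x
    by_cases h : x ∈ Set.Ioo u v
    · simp only [gf, gi, dif_pos h, dif_pos (g₀.symm ⟨x, h⟩).2]
      show (g₀ (g₀.symm ⟨x, h⟩)).val = x
      rw [Equiv.apply_symm_apply]
    · simp only [gf, gi, dif_neg h]
  have hgmono : StrictMono gf := by
    intro x y hxy
    by_cases hx : x ∈ Set.Ioo u v <;> by_cases hy : y ∈ Set.Ioo u v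
    · simp only [gf, dif_pos hx, dif_pos hy]
      exact Subtype.coe_lt_coe.mpr (hmono (Subtype.mk_lt_mk.mpr hxy))
    · simp only [gf, dif_pos hx, dif_neg hy]
      have hvy : v ≤ y := by
        by_contra hvy
        push_neg at hvy
        exact hy ⟨lt_trans hx.1 hxy, hvy⟩
      exact lt_of_lt_of_le (g₀ ⟨x, hx⟩).2.2 hvy
    · simp only [gf, dif_neg hx, dif_pos hy]
      have hxu : x ≤ u := by
        by_contra hxu
        push_neg at hxu
        exact hx ⟨hxu, lt_trans hxy hy.2⟩
      exact lt_of_le_of_lt hxu (g₀ ⟨y, hy⟩).2.1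
    · simp only [gf, dif_neg hx, dif_neg hy]
      exact hxy
  have hkg : ∀ x, k (gf x) = k x := by
    intro x
    by_cases h : x ∈ Set.Ioo u v
    · simp only [gf, dif_pos h]
      exact hκ ⟨x, h⟩
    · simp only [gf, dif_neg h]
  have hcg : ∀ x, c (gf x) = c x := fun x => congrArg Prod.fst (hkg x)
  have hQg : ∀ x, (gf x ∈ Q₀ ↔ x ∈ Q₀) := fun x =>
    decide_eq_decide.mp (congrArg Prod.snd (hkg x))
  have hgfa : gf a = b := by
    have : gf a = (g₀ ⟨a, ⟨hau, hav⟩⟩).val := dif_pos _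
    rw [this, hg₀ab]
  refine ⟨⟨gf, gi, hleft, hright⟩, ⟨a, ?_⟩, ?_, hcg⟩
  · show gf a ≠ a
    rw [hgfa]
    exact ne_of_gt hbIoo.1
  · intro x y
    show R x y ↔ R (gf x) (gf y)
    rw [hR x y, hR (gf x) (gf y), hgmono.lt_iff_lt, hgmono.lt_iff_lt, hQg x, hQg y]
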